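/- Let Z be a nonempty convex subset of a real vector space V, and let ≿ be a preorder on Z satisfying strong independence. Define the convex cone C = {λ(x - y) : λ > 0, x, y ∈ Z, x ≿ y} and the linear preorder ≿_V on V by v ≿_V w ⟺ v - w ∈ C. Then for all x, y ∈ Z: x ≿ y if and only if x ≿_V y. That is, the inclusion of Z into (V, ≿_V) represents ≿. -/

import Mathlib

theorem inclusion_represents {V : Type*} [AddCommGroup V] [Module ℝ V]
    (Z : Set V) (hne : Z.Nonempty) (hconv : Convex ℝ Z) (r : V → V → Prop)
    (hrefl : ∀ x ∈ Z, r x x)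
    (htrans : ∀ x ∈ Z, ∀ y ∈ Z, ∀ z ∈ Z, r x y → r y z → r x z)
    (hSI : ∀ (a : ℝ), 0 < a → a < 1 → ∀ x ∈ Z, ∀ y ∈ Z, ∀ z ∈ Z,
      (r x y ↔ r (a • x + (1 - a) • z) (a • y + (1 - a) • z))) :
    ∀ x ∈ Z, ∀ y ∈ Z,
      (r x y ↔ x - y ∈ {v : V | ∃ (l : ℝ) (x' y' : V),
        0 < l ∧ x' ∈ Z ∧ y' ∈ Z ∧ r x' y' ∧ v = l • (x' - y')}) := by
  intro x hx y hy
  constructor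
  · intro h
    exact ⟨1, x, y, one_pos, hx, hy, h, (one_smul ℝ _).symm⟩
  · rintro ⟨l, x', y', hl, hx', hy', hr, heq⟩
    have hl1 : (0:ℝ) < 1 + l := by linarith
    set a : ℝ := 1/(1+l) with ha
    have ha0 : 0 < a := by positivity
    have ha1 : a < 1 := by
      rw [ha, div_lt_one hl1]; linarith
    have hal : 1 - a = a * l := by
      rw [ha]; field_simp; ring
    -- key vector identity
    have key : a • y + (1 - a) • x' = a • x + (1 - a) • y' := by
      have h2 : a • (x - y) = (a * l) • (x' - y') := by
        rw [heq, smul_smul]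
      rw [hal]
      simp only [smul_sub] at h2
      have := sub_eq_sub_iff_add_eq_add.mp h2
      -- this : a•x + (a*l)•y' = (a*l)•x' + a•y
      linear_combination (norm := abel) this.symm
    have e1 := hSI a ha0 ha1 x hx y hy x' hx'
    have e2 := hSI (1-a) (by linarith) (by linarith) x' hx' y' hy' x hx
    have hA : (1-a) • x' + (1-(1-a)) • x = a • x + (1-a) • x' := by
      rw [sub_sub_cancel]; abel
    have hB : (1-a) • y' + (1-(1-a)) • x = a • x + (1-a) • y' := by
      rw [sub_sub_cancel]; abel
    rw [hA, hB] at e2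
    rw [e1, key]
    exact e2.mp hr
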